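/- For n odd, BBF_{n+1}^q equals the set of all matrices in ∪{ψ(T) : T ∈ BBF_n^q} minus the set ∪{φ(D) : D ∈ BBF_{(n+1)/2}^q}, where φ(D) is the set of (n+1) × (n+1) matrices whose two diagonal ((n+1)/2) × ((n+1)/2) blocks both equal D and whose off-diagonal blocks are arbitrary. -/

import Mathlib

def topLeft {α : Type*} {n : ℕ} (T : Matrix (Fin n) (Fin n) α) (r : ℕ) (h : r ≤ n) :
    Matrix (Fin r) (Fin r) α :=
  fun a b => T (Fin.castLE h a) (Fin.castLE h b)

def botRight {α : Type*} {n : ℕ} (T : Matrix (Fin n) (Fin n) α) (r : ℕ) (h : r ≤ n) :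
    Matrix (Fin r) (Fin r) α :=
  fun a b => T ⟨n - r + a, by have := a.isLt; omega⟩ ⟨n - r + b, by have := b.isLt; omega⟩

def BibifixFree {α : Type*} {n : ℕ} (T : Matrix (Fin n) (Fin n) α) : Prop :=
  ∀ (r : ℕ) (_ : 1 ≤ r) (h2 : r < n), topLeft T r h2.le ≠ botRight T r h2.le

def insIdx (n : ℕ) (i : Fin (n + 1)) (h : (i : ℕ) ≠ n / 2) : Fin n :=
  if hl : (i : ℕ) < n / 2 then ⟨i, by have := Nat.div_le_self n 2; omega⟩
  else ⟨(i : ℕ) - 1, by have := i.isLt; omega⟩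

def InPsi {α : Type*} {n : ℕ} (T : Matrix (Fin n) (Fin n) α)
    (T' : Matrix (Fin (n + 1)) (Fin (n + 1)) α) : Prop :=
  ∀ (i j : Fin (n + 1)) (hi : (i : ℕ) ≠ n / 2) (hj : (j : ℕ) ≠ n / 2),
    T' i j = T (insIdx n i hi) (insIdx n j hj)

/-- `M ∈ φ(D)`: the two diagonal `m × m` blocks of the `N × N` matrix `M` (where `N = 2m`)
both equal `D`, the other entries being arbitrary. -/
def InPhi {α : Type*} {m N : ℕ} (hN : 2 * m = N) (D : Matrix (Fin m) (Fin m) α)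
    (M : Matrix (Fin N) (Fin N) α) : Prop :=
  ∀ a b : Fin m,
    M ⟨a, by have := a.isLt; omega⟩ ⟨b, by have := b.isLt; omega⟩ = D a b ∧
    M ⟨m + a, by have := a.isLt; omega⟩ ⟨m + b, by have := b.isLt; omega⟩ = D a b

section Aux

variable {α : Type*}

/-- entrywise "border of length r" predicate -/
def EB {k : ℕ} (A : Matrix (Fin k) (Fin k) α) (r : ℕ) : Prop :=
  ∀ a b : ℕ, a < r → b < r → ∀ (ha : a < k) (hb : b < k)
    (ha' : k - r + a < k) (hb' : k - r + b < k),
    A ⟨a, ha⟩ ⟨b, hb⟩ = A ⟨k - r + a, ha'⟩ ⟨k - r + b, hb'⟩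

lemma eb_of_eq {k r : ℕ} (A : Matrix (Fin k) (Fin k) α) (h : r ≤ k)
    (H : topLeft A r h = botRight A r h) : EB A r := by
  intro a b ha hb _ _ _ _
  exact congrFun (congrFun H ⟨a, ha⟩) ⟨b, hb⟩

lemma eq_of_eb {k r : ℕ} (A : Matrix (Fin k) (Fin k) α) (h : r ≤ k)
    (H : EB A r) : topLeft A r h = botRight A r h := by
  funext a b
  exact H a b a.isLt b.isLt (by have := a.isLt; omega) (by have := b.isLt; omega)
    (by have := a.isLt; omega) (by have := b.isLt; omega)

lemma halve {k r : ℕ} (A : Matrix (Fin k) (Fin k) α) (hr : r ≤ k) (h2 : k < 2 * r)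
    (H : EB A r) : EB A (2 * r - k) := by
  intro a b ha hb ha1 hb1 ha2 hb2
  have h1 := H a b (by omega) (by omega) ha1 hb1 (by omega) (by omega)
  have h3 := H (k - r + a) (k - r + b) (by omega) (by omega) (by omega) (by omega)
    (by omega) (by omega)
  have e1 : (⟨k - (2 * r - k) + a, ha2⟩ : Fin k) = ⟨k - r + (k - r + a), by omega⟩ :=
    Fin.ext (by simp; omega)
  have e2 : (⟨k - (2 * r - k) + b, hb2⟩ : Fin k) = ⟨k - r + (k - r + b), by omega⟩ :=
    Fin.ext (by simp; omega)
  rw [e1, e2]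
  exact h1.trans h3

lemma descend {k : ℕ} (A : Matrix (Fin k) (Fin k) α) :
    ∀ r, 1 ≤ r → r < k → EB A r → ∃ s, 1 ≤ s ∧ 2 * s ≤ k ∧ EB A s := by
  intro r
  induction r using Nat.strong_induction_on with
  | _ r ih =>
    intro h1 h2 H
    by_cases hc : 2 * r ≤ k
    · exact ⟨r, h1, hc, H⟩
    · have hlt : 2 * r - k < r := by omega
      have h1' : 1 ≤ 2 * r - k := by omega
      have h2' : 2 * r - k < k := by omega
      exact ih (2 * r - k) hlt h1' h2' (halve A (by omega) (by omega) H)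

variable {n : ℕ} {T : Matrix (Fin n) (Fin n) α} {M : Matrix (Fin (n + 1)) (Fin (n + 1)) α}

lemma psi_lo (hPsi : InPsi T M) (a b : ℕ) (ha : a < n / 2) (hb : b < n / 2) :
    M ⟨a, by have := Nat.div_le_self n 2; omega⟩ ⟨b, by have := Nat.div_le_self n 2; omega⟩
      = T ⟨a, by have := Nat.div_le_self n 2; omega⟩ ⟨b, by have := Nat.div_le_self n 2; omega⟩ := by
  have h := hPsi ⟨a, by have := Nat.div_le_self n 2; omega⟩
    ⟨b, by have := Nat.div_le_self n 2; omega⟩ (by simp; omega) (by simp; omega)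
  rw [h]
  congr 1 <;> · simp only [insIdx]; rw [dif_pos (by simpa using (by omega : _ < n / 2))]

lemma psi_hi (hPsi : InPsi T M) (a b : ℕ) (ha : n / 2 ≤ a) (hb : n / 2 ≤ b)
    (ha' : a < n) (hb' : b < n) :
    M ⟨a + 1, by omega⟩ ⟨b + 1, by omega⟩ = T ⟨a, ha'⟩ ⟨b, hb'⟩ := by
  have h := hPsi ⟨a + 1, by omega⟩ ⟨b + 1, by omega⟩ (by simp; omega) (by simp; omega)
  rw [h]
  congr 1 <;> · simp only [insIdx]; rw [dif_neg (by simp; omega)]; exact Fin.ext (by simp)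

lemma transfer (hPsi : InPsi T M) (s : ℕ) (hs1 : 1 ≤ s) (hs : s ≤ n / 2) :
    EB T s ↔ EB M s := by
  have hdn := Nat.div_le_self n 2
  have hlo : ∀ a b : ℕ, a < s → b < s → ∀ (pa : a < n + 1) (pb : b < n + 1)
      (pa' : a < n) (pb' : b < n), M ⟨a, pa⟩ ⟨b, pb⟩ = T ⟨a, pa'⟩ ⟨b, pb'⟩ := by
    intro a b ha hb pa pb pa' pb'
    exact psi_lo hPsi a b (by omega) (by omega)
  have hhi : ∀ a b : ℕ, a < s → b < s → ∀ (pa : n + 1 - s + a < n + 1)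
      (pb : n + 1 - s + b < n + 1) (pa' : n - s + a < n) (pb' : n - s + b < n),
      M ⟨n + 1 - s + a, pa⟩ ⟨n + 1 - s + b, pb⟩ = T ⟨n - s + a, pa'⟩ ⟨n - s + b, pb'⟩ := by
    intro a b ha hb pa pb pa' pb'
    have h := psi_hi hPsi (n - s + a) (n - s + b) (by omega) (by omega) (by omega) (by omega)
    have e1 : (⟨n + 1 - s + a, pa⟩ : Fin (n + 1)) = ⟨n - s + a + 1, by omega⟩ :=
      Fin.ext (by simp; omega)
    have e2 : (⟨n + 1 - s + b, pb⟩ : Fin (n + 1)) = ⟨n - s + b + 1, by omega⟩ :=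
      Fin.ext (by simp; omega)
    rw [e1, e2]; exact h
  constructor
  · intro H a b ha hb pa pb pa' pb'
    rw [hlo a b ha hb pa pb (by omega) (by omega),
      hhi a b ha hb pa' pb' (by omega) (by omega)]
    exact H a b ha hb (by omega) (by omega) (by omega) (by omega)
  · intro H a b ha hb pa pb pa' pb'
    rw [← hlo a b ha hb (by omega) (by omega) pa pb,
      ← hhi a b ha hb (by omega) (by omega) pa' pb']
    exact H a b ha hb (by omega) (by omega) (by omega) (by omega)

lemma exists_insdel {k : ℕ} (M : Matrix (Fin (k + 1)) (Fin (k + 1)) α) :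
    ∃ T : Matrix (Fin k) (Fin k) α, InPsi T M := by
  refine ⟨fun a b =>
      M ⟨if (a : ℕ) < k / 2 then (a : ℕ) else (a : ℕ) + 1,
          by have := a.isLt; split_ifs <;> omega⟩
        ⟨if (b : ℕ) < k / 2 then (b : ℕ) else (b : ℕ) + 1,
          by have := b.isLt; split_ifs <;> omega⟩, ?_⟩
  intro i j hi hj
  have key : ∀ (i : Fin (k + 1)) (hi : (i : ℕ) ≠ k / 2) (p : _),
      (⟨if ((insIdx k i hi : Fin k) : ℕ) < k / 2 then ((insIdx k i hi : Fin k) : ℕ)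
        else ((insIdx k i hi : Fin k) : ℕ) + 1, p⟩ : Fin (k + 1)) = i := by
    intro i hi p
    apply Fin.ext
    simp only [insIdx]
    by_cases h : (i : ℕ) < k / 2
    · simp only [dif_pos h]; simp [h]
    · simp only [dif_neg h]
      have hgt : k / 2 < (i : ℕ) := by omega
      have h2 : ¬ ((i : ℕ) - 1 < k / 2) := by omega
      simp only [h2, if_false]
      omega
  show M i j = M _ _
  rw [key i hi, key j hj]

lemma T_bbf {n : ℕ} {T : Matrix (Fin n) (Fin n) α} {M : Matrix (Fin (n + 1)) (Fin (n + 1)) α}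
    (hPsi : InPsi T M) (hM : BibifixFree M) : BibifixFree T := by
  intro r hr1 hr2 Heq
  obtain ⟨s, hs1, hs2, hsEB⟩ := descend T r hr1 hr2 (eb_of_eq T hr2.le Heq)
  have hEBM : EB M s := (transfer hPsi s hs1 (by omega)).1 hsEB
  exact hM s hs1 (by omega) (eq_of_eb M (by omega) hEBM)

lemma phi_eb {m n : ℕ} (hm : 2 * m = n + 1) {M : Matrix (Fin (n + 1)) (Fin (n + 1)) α}
    {D : Matrix (Fin m) (Fin m) α} (hPhi : InPhi (by omega) D M) : EB M m := by
  intro a b ha hb pa pb pa' pb'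
  have h1 := (hPhi ⟨a, ha⟩ ⟨b, hb⟩).1
  have h2 := (hPhi ⟨a, ha⟩ ⟨b, hb⟩).2
  have e1 : (⟨n + 1 - m + a, pa'⟩ : Fin (n + 1)) = ⟨m + a, by omega⟩ := Fin.ext (by simp; omega)
  have e2 : (⟨n + 1 - m + b, pb'⟩ : Fin (n + 1)) = ⟨m + b, by omega⟩ := Fin.ext (by simp; omega)
  rw [e1, e2]
  exact h1.trans h2.symm

lemma eb_phi {m n : ℕ} (hm : 2 * m = n + 1) {M : Matrix (Fin (n + 1)) (Fin (n + 1)) α}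
    (hEB : EB M m) : InPhi (by omega) (topLeft M m (by omega)) M := by
  intro a b
  refine ⟨rfl, ?_⟩
  have h := hEB a b a.isLt b.isLt (by have := a.isLt; omega) (by have := b.isLt; omega)
    (by have := a.isLt; omega) (by have := b.isLt; omega)
  have e1 : (⟨m + (a : ℕ), by have := a.isLt; omega⟩ : Fin (n + 1))
      = ⟨n + 1 - m + a, by have := a.isLt; omega⟩ := Fin.ext (by simp; omega)
  have e2 : (⟨m + (b : ℕ), by have := b.isLt; omega⟩ : Fin (n + 1))
      = ⟨n + 1 - m + b, by have := b.isLt; omega⟩ := Fin.ext (by simp; omega)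
  rw [e1, e2]
  exact h.symm

lemma liftD {m n u : ℕ} (hm : 2 * m = n + 1) {M : Matrix (Fin (n + 1)) (Fin (n + 1)) α}
    (hEBm : EB M m) (hu : u < m)
    (hEBD : EB (topLeft M m (by omega)) u) : EB M u := by
  intro a b ha hb pa pb pa' pb'
  have h1 := hEBD a b ha hb (by omega) (by omega) (by omega) (by omega)
  have h2 := hEBm (m - u + a) (m - u + b) (by omega) (by omega) (by omega) (by omega)
    (by omega) (by omega)
  have e1 : (⟨n + 1 - u + a, pa'⟩ : Fin (n + 1))
      = ⟨n + 1 - m + (m - u + a), by omega⟩ := Fin.ext (by simp; omega)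
  have e2 : (⟨n + 1 - u + b, pb'⟩ : Fin (n + 1))
      = ⟨n + 1 - m + (m - u + b), by omega⟩ := Fin.ext (by simp; omega)
  rw [e1, e2]
  exact (show M ⟨a, pa⟩ ⟨b, pb⟩ = M ⟨m - u + a, by omega⟩ ⟨m - u + b, by omega⟩ from h1).trans h2

end Aux

theorem stmt_8 {q n : ℕ} (hn : n % 2 = 1) (M : Matrix (Fin (n + 1)) (Fin (n + 1)) (Fin q)) :
    BibifixFree M ↔
      (∃ T : Matrix (Fin n) (Fin n) (Fin q), BibifixFree T ∧ InPsi T M) ∧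
      ¬ ∃ D : Matrix (Fin ((n + 1) / 2)) (Fin ((n + 1) / 2)) (Fin q),
          BibifixFree D ∧ InPhi (by omega) D M := by
  have hm : 2 * ((n + 1) / 2) = n + 1 := by omega
  constructor
  · intro hM
    obtain ⟨T, hPsi⟩ := exists_insdel M
    refine ⟨⟨T, T_bbf hPsi hM, hPsi⟩, ?_⟩
    rintro ⟨D, hD, hPhi⟩
    have hEB : EB M ((n + 1) / 2) := phi_eb hm hPhi
    exact hM ((n + 1) / 2) (by omega) (by omega) (eq_of_eb M (by omega) hEB)
  · rintro ⟨⟨T, hT, hPsi⟩, hnD⟩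
    intro r hr1 hr2 Heq
    obtain ⟨s, hs1, hs2, hsEB⟩ := descend M r hr1 hr2 (eb_of_eq M hr2.le Heq)
    by_cases hcase : s ≤ n / 2
    · exact hT s hs1 (by omega) (eq_of_eb T (by omega) ((transfer hPsi s hs1 hcase).2 hsEB))
    · have hsm : s = (n + 1) / 2 := by omega
      subst hsm
      have hPhi := eb_phi hm hsEB
      have hDnb : ¬ BibifixFree (topLeft M ((n + 1) / 2) (by omega)) := fun h => hnD ⟨_, h, hPhi⟩
      simp only [BibifixFree] at hDnb
      push_neg at hDnb
      obtain ⟨u, hu1, hu2, hEq⟩ := hDnb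
      have hEBMu : EB M u := liftD hm hsEB hu2 (eb_of_eq _ hu2.le hEq)
      have hEBTu : EB T u := (transfer hPsi u hu1 (by omega)).2 hEBMu
      exact hT u hu1 (by omega) (eq_of_eb T (by omega) hEBTu)
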